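/- Let φ : X → ℝ ∪ {∞} be a proper convex function on a Euclidean space and (x̄, v̄) ∈ gph ∂φ. For any z ∈ D∂φ(x̄|v̄)(w), one has 2⟨z, w⟩ ≥ d²φ(x̄|v̄)(w) + d²φ*(v̄|x̄)(z), where d²φ denotes the second subderivative and φ* the Fenchel conjugate. -/
import Mathlib


open Filter Topology Metric Set
open scoped RealInnerProductSpace NNReal ENNReal

noncomputable section

/-- Bouligand (contingent) tangent cone. -/
def tanCone {G : Type*} [AddCommGroup G] [Module ℝ G] [TopologicalSpace G]
    (s : Set G) (x : G) : Set G :=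
  {w | ∃ (t : ℕ → ℝ) (wk : ℕ → G), (∀ n, 0 < t n) ∧
    Tendsto t atTop (𝓝 0) ∧ Tendsto wk atTop (𝓝 w) ∧ ∀ n, x + t n • wk n ∈ s}

variable {E F : Type*} [NormedAddCommGroup E] [InnerProductSpace ℝ E]
  [NormedAddCommGroup F] [InnerProductSpace ℝ F]

/-- Graph of a set-valued mapping. -/
def gph (S : E → Set F) : Set (E × F) := {p | p.2 ∈ S p.1}

/-- Graphical derivative. -/
def gder (S : E → Set F) (x : E) (y : F) (w : E) : Set F :=
  {z | (w, z) ∈ tanCone (gph S) (x, y)}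

/-- Local closedness of the graph around a point. -/
def LocallyClosedGraph (S : E → Set F) (x : E) (y : F) : Prop :=
  ∃ U ∈ 𝓝 ((x, y) : E × F), IsClosed (U ∩ gph S)

/-- Metric subregularity of a set-valued mapping at `x` for `y`. -/
def MetrSubreg (S : E → Set F) (x : E) (y : F) : Prop :=
  ∃ κ : ℝ≥0, ∃ ε : ℝ, 0 < ε ∧ ∀ x' ∈ ball x ε,
    EMetric.infEdist x' {u | y ∈ S u} ≤ (κ : ℝ≥0∞) * EMetric.infEdist y (S x')

/-- Convex subdifferential of an extended-real-valued function. -/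
def subdiff (φ : E → EReal) (x : E) : Set E :=
  {v | ∀ u, φ x + ((⟪v, u - x⟫ : ℝ) : EReal) ≤ φ u}

/-- Properness. -/
def ProperFn (φ : E → EReal) : Prop := (∀ x, φ x ≠ ⊥) ∧ ∃ x, φ x ≠ ⊤

/-- Convexity via the epigraph. -/
def ConvexFn (φ : E → EReal) : Prop := Convex ℝ {p : E × ℝ | φ p.1 ≤ (p.2 : EReal)}

/-- Fenchel conjugate. -/
def conjFn (φ : E → EReal) (v : E) : EReal := ⨆ x, ((⟪v, x⟫ : ℝ) : EReal) - φ x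

/-- Second subderivative. -/
def secondSubderiv (φ : E → EReal) (x v w : E) : EReal :=
  Filter.liminf (fun p : ℝ × E =>
    (((2 / p.1 ^ 2 : ℝ)) : EReal) *
      (φ (x + p.1 • p.2) - φ x - ((p.1 * ⟪v, p.2⟫ : ℝ) : EReal)))
    ((𝓝[>] (0 : ℝ)) ×ˢ 𝓝 w)

/-- Quadratic growth condition at `x` for `v`. -/
def QuadGrowth (φ : E → EReal) (x v : E) : Prop :=
  ∃ c : ℝ, 0 < c ∧ ∃ ε : ℝ, 0 < ε ∧ ∀ u ∈ ball x ε,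
    φ x + ((⟪v, u - x⟫ + c / 2 * (infDist u {u' | v ∈ subdiff φ u'}) ^ 2 : ℝ) : EReal) ≤ φ u


section Helpers

variable {E : Type*} [NormedAddCommGroup E] [InnerProductSpace ℝ E]

lemma subdiff_finite (φ : E → EReal) (hp : ProperFn φ) {x v : E} (h : v ∈ subdiff φ x) :
    φ x = ((φ x).toReal : EReal) := by
  have hb : φ x ≠ ⊥ := hp.1 x
  have ht : φ x ≠ ⊤ := by
    intro htop
    obtain ⟨u, hu⟩ := hp.2
    have h2 := h u
    rw [htop, EReal.top_add_coe] at h2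
    exact hu (top_le_iff.mp h2)
  exact (EReal.coe_toReal ht hb).symm

lemma conj_formula (φ : E → EReal) (hp : ProperFn φ) {x v : E} (h : v ∈ subdiff φ x) :
    conjFn φ v = ((⟪v, x⟫ - (φ x).toReal : ℝ) : EReal) := by
  have hx := subdiff_finite φ hp h
  set r := (φ x).toReal with hr
  refine le_antisymm (iSup_le fun u => ?_) ?_
  · have hu := h u
    rw [hx] at hu
    have h2 : ((⟪v, u⟫ : ℝ) : EReal) - φ u ≤ ((⟪v, u⟫ : ℝ) : EReal) - (((r : ℝ) : EReal) + ((⟪v, u - x⟫ : ℝ) : EReal)) :=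
      EReal.sub_le_sub le_rfl hu
    refine h2.trans (le_of_eq ?_)
    norm_cast
    rw [inner_sub_right]
    ring
  · refine le_trans (le_of_eq ?_) (le_iSup (fun u => ((⟪v, u⟫ : ℝ) : EReal) - φ u) x)
    rw [hx]
    norm_cast

lemma subdiff_conj (φ : E → EReal) (hp : ProperFn φ) {x v : E} (h : v ∈ subdiff φ x) :
    x ∈ subdiff (conjFn φ) v := by
  intro u
  rw [conj_formula φ hp h]
  have h2 : ((⟪u, x⟫ - (φ x).toReal : ℝ) : EReal) ≤ conjFn φ u := by
    refine le_trans (le_of_eq ?_) (le_iSup (fun y => ((⟪u, y⟫ : ℝ) : EReal) - φ y) x)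
    rw [subdiff_finite φ hp h]
    norm_cast
  refine le_trans (le_of_eq ?_) h2
  norm_cast
  rw [inner_sub_right, real_inner_comm x u, real_inner_comm x v]
  ring

lemma liminf_map_le' {γ δ : Type*} (u : δ → EReal) (m : γ → δ) (f : Filter γ) (g : Filter δ)
    (hm : Filter.Tendsto m f g) :
    Filter.liminf u g ≤ Filter.liminf (fun n => u (m n)) f := by
  have heq : Filter.liminf u (Filter.map m f) = Filter.liminf (fun n => u (m n)) f := by
    simp only [Filter.liminf, Filter.map_map]
    rfl
  rw [← heq]
  exact Filter.liminf_le_liminf_of_le hm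

lemma secondSubderiv_le (ψ : E → EReal) (x v w : E) (m : ℕ → ℝ × E)
    (hm : Filter.Tendsto m Filter.atTop ((nhdsWithin (0:ℝ) (Set.Ioi 0)) ×ˢ nhds w)) :
    secondSubderiv ψ x v w ≤
      Filter.liminf (fun n => (((2 / (m n).1 ^ 2 : ℝ)) : EReal) *
        (ψ (x + (m n).1 • (m n).2) - ψ x - (((m n).1 * ⟪v, (m n).2⟫ : ℝ) : EReal))) Filter.atTop :=
  liminf_map_le' _ m _ _ hm

end Helpers

/-- `2⟨z,w⟩ ≥ d²φ(xb|vb)(w) + d²φ*(vb|xb)(z)` for `z ∈ D∂φ(xb|vb)(w)`. -/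
theorem stmt3 {E : Type*} [NormedAddCommGroup E] [InnerProductSpace ℝ E]
    [FiniteDimensional ℝ E]
    (φ : E → EReal) (hproper : ProperFn φ) (hconv : ConvexFn φ)
    (xb vb : E) (hsub : vb ∈ subdiff φ xb) (w z : E)
    (hz : z ∈ gder (subdiff φ) xb vb w) :
    secondSubderiv φ xb vb w + secondSubderiv (conjFn φ) vb xb z
      ≤ ((2 * ⟪z, w⟫ : ℝ) : EReal) := by
  obtain ⟨t, wk, ht, ht0, hwk, hmem⟩ := hz
  -- component sequences
  set wn : ℕ → E := fun n => (wk n).1 with hwn_def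
  set zn : ℕ → E := fun n => (wk n).2 with hzn_def
  have hwn : Tendsto wn atTop (𝓝 w) := (continuous_fst.tendsto _).comp hwk
  have hzn : Tendsto zn atTop (𝓝 z) := (continuous_snd.tendsto _).comp hwk
  have htne : ∀ n, t n ≠ 0 := fun n => ne_of_gt (ht n)
  -- membership in the subdifferential graph
  have hsubn : ∀ n, vb + t n • zn n ∈ subdiff φ (xb + t n • wn n) := by
    intro n
    have h0 := hmem n
    simpa [gph, hwn_def, hzn_def, Prod.smul_def] using h0
  set x_ : ℕ → E := fun n => xb + t n • wn n with hx_def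
  set v_ : ℕ → E := fun n => vb + t n • zn n with hv_def
  -- finiteness
  set r0 : ℝ := (φ xb).toReal with hr0_def
  have hr0 : φ xb = (r0 : EReal) := subdiff_finite φ hproper hsub
  set rn : ℕ → ℝ := fun n => (φ (x_ n)).toReal with hrn_def
  have hrn : ∀ n, φ (x_ n) = ((rn n : ℝ) : EReal) := fun n =>
    subdiff_finite φ hproper (hsubn n)
  -- conjugate values
  have hconj0 : conjFn φ vb = ((⟪vb, xb⟫ - r0 : ℝ) : EReal) := conj_formula φ hproper hsub
  have hconjn : ∀ n, conjFn φ (v_ n) = ((⟪v_ n, x_ n⟫ - rn n : ℝ) : EReal) := fun n =>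
    conj_formula φ hproper (hsubn n)
  -- real sequences
  set a : ℕ → ℝ := fun n => 2 / t n ^ 2 * (rn n - r0 - t n * ⟪vb, wn n⟫) with ha_def
  set b : ℕ → ℝ := fun n =>
    2 / t n ^ 2 * ((⟪v_ n, x_ n⟫ - rn n) - (⟪vb, xb⟫ - r0) - t n * ⟪xb, zn n⟫) with hb_def
  set c : ℕ → ℝ := fun n => 2 * ⟪zn n, wn n⟫ with hc_def
  -- sum identity
  have hab : ∀ n, a n + b n = c n := by
    intro n
    simp only [ha_def, hb_def, hc_def, hx_def, hv_def, inner_add_left, inner_add_right,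
      real_inner_smul_left, real_inner_smul_right, real_inner_comm xb (zn n)]
    field_simp [htne n]
    ring
  -- nonnegativity of a
  have ha0 : ∀ n, 0 ≤ a n := by
    intro n
    have h1 := hsub (x_ n)
    rw [hr0, hrn n] at h1
    have hxx : x_ n - xb = t n • wn n := by simp [hx_def]
    rw [hxx, real_inner_smul_right] at h1
    have h2 : r0 + t n * ⟪vb, wn n⟫ ≤ rn n := by exact_mod_cast h1
    have h3 : (0:ℝ) ≤ 2 / t n ^ 2 := by positivity
    have h4 : (0:ℝ) ≤ rn n - r0 - t n * ⟪vb, wn n⟫ := by linarith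
    exact mul_nonneg h3 h4
  -- nonnegativity of b
  have hb0 : ∀ n, 0 ≤ b n := by
    intro n
    have h1 := subdiff_conj φ hproper hsub (v_ n)
    rw [hconj0, hconjn n] at h1
    have hvv : v_ n - vb = t n • zn n := by simp [hv_def]
    rw [hvv, real_inner_smul_right] at h1
    have h2 : (⟪vb, xb⟫ - r0) + t n * ⟪xb, zn n⟫ ≤ ⟪v_ n, x_ n⟫ - rn n := by exact_mod_cast h1
    have h3 : (0:ℝ) ≤ 2 / t n ^ 2 := by positivity
    have h4 : (0:ℝ) ≤ (⟪v_ n, x_ n⟫ - rn n) - (⟪vb, xb⟫ - r0) - t n * ⟪xb, zn n⟫ := by linarith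
    exact mul_nonneg h3 h4
  -- tendsto facts
  have htp : Tendsto t atTop (𝓝[>] (0:ℝ)) :=
    tendsto_nhdsWithin_iff.mpr ⟨ht0, Eventually.of_forall fun n => ht n⟩
  have hcten : Tendsto c atTop (𝓝 (2 * ⟪z, w⟫)) := by
    have : Tendsto (fun n => (⟪zn n, wn n⟫ : ℝ)) atTop (𝓝 ⟪z, w⟫) := hzn.inner hwn
    simpa [hc_def] using this.const_mul 2
  have hctenE : Tendsto (fun n => ((c n : ℝ) : EReal)) atTop (𝓝 ((2 * ⟪z, w⟫ : ℝ) : EReal)) := by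
    rw [← EReal.tendsto_coe] at hcten
    exact hcten
  -- liminf bounds for the two second subderivatives
  have hS1 : secondSubderiv φ xb vb w ≤ liminf (fun n => ((a n : ℝ) : EReal)) atTop := by
    have hm : Tendsto (fun n => (t n, wn n)) atTop ((𝓝[>] (0:ℝ)) ×ˢ 𝓝 w) :=
      htp.prodMk hwn
    refine (secondSubderiv_le φ xb vb w _ hm).trans (le_of_eq ?_)
    congr 1
    funext n
    rw [show (xb + t n • wn n) = x_ n from rfl, hrn n, hr0]
    norm_cast
  have hS2 : secondSubderiv (conjFn φ) vb xb z ≤ liminf (fun n => ((b n : ℝ) : EReal)) atTop := by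
    have hm : Tendsto (fun n => (t n, zn n)) atTop ((𝓝[>] (0:ℝ)) ×ˢ 𝓝 z) :=
      htp.prodMk hzn
    refine (secondSubderiv_le (conjFn φ) vb xb z _ hm).trans (le_of_eq ?_)
    congr 1
    funext n
    rw [show (vb + t n • zn n) = v_ n from rfl, hconjn n, hconj0]
    norm_cast
  set A : EReal := liminf (fun n => ((a n : ℝ) : EReal)) atTop with hA_def
  set B : EReal := liminf (fun n => ((b n : ℝ) : EReal)) atTop with hB_def
  -- A and B are finite
  have hA0 : (0 : EReal) ≤ A :=
    le_liminf_of_le (by isBoundedDefault) (Eventually.of_forall fun n => by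
      exact_mod_cast ha0 n)
  have hB0 : (0 : EReal) ≤ B :=
    le_liminf_of_le (by isBoundedDefault) (Eventually.of_forall fun n => by
      exact_mod_cast hb0 n)
  have hAc : A ≤ ((2 * ⟪z, w⟫ : ℝ) : EReal) := by
    have h1 : A ≤ liminf (fun n => ((c n : ℝ) : EReal)) atTop := by
      refine liminf_le_liminf (Eventually.of_forall fun n => ?_)
      have : a n ≤ c n := by have := hb0 n; have := hab n; linarith
      exact_mod_cast this
    rwa [hctenE.liminf_eq] at h1
  have hBc : B ≤ ((2 * ⟪z, w⟫ : ℝ) : EReal) := by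
    have h1 : B ≤ liminf (fun n => ((c n : ℝ) : EReal)) atTop := by
      refine liminf_le_liminf (Eventually.of_forall fun n => ?_)
      have : b n ≤ c n := by have := ha0 n; have := hab n; linarith
      exact_mod_cast this
    rwa [hctenE.liminf_eq] at h1
  have hAtop : A ≠ ⊤ := (hAc.trans_lt (EReal.coe_lt_top _)).ne
  have hBtop : B ≠ ⊤ := (hBc.trans_lt (EReal.coe_lt_top _)).ne
  have hAbot : A ≠ ⊥ := by
    intro h
    rw [h] at hA0
    simp at hA0
  have hBbot : B ≠ ⊥ := by
    intro h
    rw [h] at hB0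
    simp at hB0
  set A' : ℝ := A.toReal with hA'_def
  set B' : ℝ := B.toReal with hB'_def
  have hA' : A = (A' : EReal) := (EReal.coe_toReal hAtop hAbot).symm
  have hB' : B = (B' : EReal) := (EReal.coe_toReal hBtop hBbot).symm
  -- the key inequality
  have key : ∀ p q : ℝ, (p : EReal) < A → (q : EReal) < B → p + q ≤ 2 * ⟪z, w⟫ := by
    intro p q hp hq
    have h1 : ∀ᶠ n in atTop, (p : EReal) < ((a n : ℝ) : EReal) :=
      eventually_lt_of_lt_liminf hp
    have h2 : ∀ᶠ n in atTop, (q : EReal) < ((b n : ℝ) : EReal) :=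
      eventually_lt_of_lt_liminf hq
    have h3 : ∀ᶠ n in atTop, p + q ≤ c n := by
      filter_upwards [h1, h2] with n h1n h2n
      have h1n' : p < a n := by exact_mod_cast h1n
      have h2n' : q < b n := by exact_mod_cast h2n
      have := hab n
      linarith
    exact ge_of_tendsto hcten h3
  have hsum : A' + B' ≤ 2 * ⟪z, w⟫ := by
    by_contra hcon
    push_neg at hcon
    set δ : ℝ := (A' + B' - 2 * ⟪z, w⟫) / 3 with hδ_def
    have hδ : 0 < δ := by simp only [hδ_def]; linarith
    have hp : ((A' - δ : ℝ) : EReal) < A := by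
      rw [hA']
      exact_mod_cast sub_lt_self A' hδ
    have hq : ((B' - δ : ℝ) : EReal) < B := by
      rw [hB']
      exact_mod_cast sub_lt_self B' hδ
    have := key _ _ hp hq
    simp only [hδ_def] at this
    linarith
  calc secondSubderiv φ xb vb w + secondSubderiv (conjFn φ) vb xb z
      ≤ A + B := add_le_add hS1 hS2
    _ = ((A' + B' : ℝ) : EReal) := by rw [hA', hB']; norm_cast
    _ ≤ ((2 * ⟪z, w⟫ : ℝ) : EReal) := by exact_mod_cast hsum

end
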